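/- (Influence function of the cumulant generating functional at the saddlepoint, K̇(z₀).) Let t > 0, x ∈ ℝ, and set z₀ = (t − 1)/(2t). Suppose z : ℝ → ℝ satisfies z(0) = z₀, z is differentiable at 0 with z′(0) = (1/2)·t^{−5/2}·e^{ (t−1) x² / (2t) }·( t − x² ), and z(ε) < 1/2 on a neighborhood of 0. Then the function ε ↦ log ∫_ℝ e^{z(ε) y²} d[(1−ε)·Φ_{0,1} + ε·δ_x](y) is differentiable at 0 with derivative (3/2)·t^{−1/2}·e^{z₀ x²} − (1/2)·t^{−3/2}·x²·e^{z₀ x²} − 1. -/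

import Mathlib

open MeasureTheory ProbabilityTheory Real
open scoped ENNReal NNReal

lemma mgf_sq_gauss (c : ℝ) (hc : c < 1 / 2) :
    ∫ y, Real.exp (c * y ^ 2) ∂(gaussianReal 0 1) = (1 - 2 * c) ^ (-(1 : ℝ) / 2) := by
  have h12 : (0:ℝ) < 1 - 2 * c := by linarith
  have hb : (0:ℝ) < 1/2 - c := by linarith
  rw [gaussianReal_of_var_ne_zero 0 one_ne_zero]
  have hmeas : Measurable fun y => (gaussianPDFReal 0 1 y).toNNReal :=
    (measurable_gaussianPDFReal 0 1).real_toNNReal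
  have hpdf : gaussianPDF 0 1 = fun y => ((gaussianPDFReal 0 1 y).toNNReal : ℝ≥0∞) := rfl
  rw [hpdf, integral_withDensity_eq_integral_smul hmeas]
  have h1 : ∀ y : ℝ, (gaussianPDFReal 0 1 y).toNNReal • Real.exp (c * y ^ 2)
      = (√(2 * π))⁻¹ * Real.exp (-(1/2 - c) * y ^ 2) := by
    intro y
    rw [NNReal.smul_def, Real.coe_toNNReal _ (gaussianPDFReal_nonneg 0 1 y)]
    simp only [gaussianPDFReal, NNReal.coe_one, mul_one, sub_zero]
    rw [smul_eq_mul, mul_assoc, ← Real.exp_add]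
    ring_nf
  simp only [h1]
  rw [integral_const_mul, integral_gaussian]
  rw [show π / (1/2 - c) = (2*π) / (1 - 2*c) by field_simp]
  rw [Real.sqrt_div (by positivity : (0:ℝ) ≤ 2*π)]
  rw [show -(1:ℝ)/2 = -(1/2) by ring, Real.rpow_neg h12.le, ← Real.sqrt_eq_rpow]
  have h2 : √(2*π) ≠ 0 := by positivity
  field_simp

theorem stmt13 (t x : ℝ) (ht : 0 < t) (z : ℝ → ℝ)
    (hz0 : z 0 = (t - 1) / (2 * t))
    (hz' : HasDerivAt z
      ((1 / 2) * t ^ (-(5 : ℝ) / 2) * Real.exp ((t - 1) * x ^ 2 / (2 * t))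
        * (t - x ^ 2)) 0)
    (hlt : ∀ᶠ ε in nhds (0 : ℝ), z ε < 1 / 2) :
    HasDerivAt
      (fun ε : ℝ => Real.log
        ((1 - ε) * (∫ y, Real.exp (z ε * y ^ 2) ∂(gaussianReal 0 1))
          + ε * Real.exp (z ε * x ^ 2)))
      ((3 / 2) * t ^ (-(1 : ℝ) / 2) * Real.exp (((t - 1) / (2 * t)) * x ^ 2)
        - (1 / 2) * t ^ (-(3 : ℝ) / 2) * x ^ 2
            * Real.exp (((t - 1) / (2 * t)) * x ^ 2)
        - 1) 0 := by
  have ht' : t ≠ 0 := ht.ne'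
  set u := t ^ ((1:ℝ)/2) with hu_def
  have hu : 0 < u := Real.rpow_pos_of_pos ht _
  have hu2 : u * u = t := by
    rw [hu_def, ← Real.rpow_add ht]; norm_num
  have hr1 : t ^ (-(1:ℝ)/2) = u⁻¹ := by
    rw [show -(1:ℝ)/2 = -((1:ℝ)/2) by ring, Real.rpow_neg ht.le]
  have hr3 : t ^ (-(3:ℝ)/2) = (u * t)⁻¹ := by
    rw [show -(3:ℝ)/2 = -((1:ℝ)/2 + 1) by ring, Real.rpow_neg ht.le,
      Real.rpow_add ht, Real.rpow_one]
  have hr5 : t ^ (-(5:ℝ)/2) = (u * (t * t))⁻¹ := by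
    rw [show -(5:ℝ)/2 = -((1:ℝ)/2 + 1 + 1) by ring, Real.rpow_neg ht.le,
      Real.rpow_add ht, Real.rpow_add ht, Real.rpow_one, mul_assoc]
  have h1t : 1 - 2 * z 0 = t⁻¹ := by rw [hz0]; field_simp; ring
  have hinv1 : (t⁻¹ : ℝ) ^ (-(1:ℝ)/2) = u := by
    rw [Real.inv_rpow ht.le, hr1, inv_inv]
  have hinv2 : (t⁻¹ : ℝ) ^ (-(1:ℝ)/2 - 1) = u * t := by
    rw [show -(1:ℝ)/2 - 1 = -(3:ℝ)/2 by ring, Real.inv_rpow ht.le, hr3, inv_inv]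
  set z' : ℝ := (1 / 2) * t ^ (-(5 : ℝ) / 2) * Real.exp ((t - 1) * x ^ 2 / (2 * t))
        * (t - x ^ 2) with hz'def
  -- derivative of the inner function
  have hA : HasDerivAt (fun ε => 1 - 2 * z ε) (0 - 2 * z') 0 :=
    (hasDerivAt_const 0 (1:ℝ)).sub (hz'.const_mul 2)
  have hne : (1 : ℝ) - 2 * z 0 ≠ 0 := by rw [h1t]; exact inv_ne_zero ht'
  have hB : HasDerivAt (fun ε => (1 - 2 * z ε) ^ (-(1:ℝ)/2))
      ((0 - 2 * z') * (-(1:ℝ)/2) * (1 - 2 * z 0) ^ (-(1:ℝ)/2 - 1)) 0 :=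
    hA.rpow_const (Or.inl hne)
  have hC : HasDerivAt (fun ε : ℝ => 1 - ε) (0 - 1) 0 :=
    (hasDerivAt_const 0 (1:ℝ)).sub (hasDerivAt_id 0)
  have hCB := hC.mul hB
  have hE : HasDerivAt (fun ε => Real.exp (z ε * x ^ 2))
      (Real.exp (z 0 * x ^ 2) * (z' * x ^ 2)) 0 := (hz'.mul_const (x ^ 2)).exp
  have hIE := (hasDerivAt_id 0).mul hE
  have hg := hCB.add hIE
  have hg0 : ((fun ε => (1 - ε) * (1 - 2 * z ε) ^ (-(1:ℝ)/2)) 0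
      + (fun ε => id ε * Real.exp (z ε * x ^ 2)) 0) ≠ 0 := by
    simp only [id_eq, sub_zero, one_mul, zero_mul, add_zero, h1t, hinv1]
    exact hu.ne'
  have hlog := hg.log hg0
  have heq : (fun ε : ℝ => Real.log
        ((1 - ε) * (∫ y, Real.exp (z ε * y ^ 2) ∂(gaussianReal 0 1))
          + ε * Real.exp (z ε * x ^ 2)))
      =ᶠ[nhds (0:ℝ)] fun ε =>
        Real.log ((fun ε => (1 - ε) * (1 - 2 * z ε) ^ (-(1:ℝ)/2)) ε
          + (fun ε => id ε * Real.exp (z ε * x ^ 2)) ε) := by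
    filter_upwards [hlt] with ε hε
    rw [mgf_sq_gauss _ hε]
    simp [id_eq]
  have := hlog.congr_of_eventuallyEq heq
  convert this using 1
  · rfl
  · rfl
  simp only [Pi.add_apply, Pi.mul_apply, id_eq, sub_zero, one_mul, zero_mul, add_zero, mul_zero, zero_add, mul_one,
    h1t, hinv1, hinv2]
  rw [hz'def, hr5, hz0,
    show (t - 1) * x ^ 2 / (2 * t) = ((t - 1) / (2 * t)) * x ^ 2 by ring,
    hr1, hr3]
  set E := Real.exp ((t - 1) / (2 * t) * x ^ 2)
  field_simp
  ring_nf
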